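/- Let p be a probability distribution over a countable alphabet, X^n an i.i.d. sample of size n, and M_max(X^n) = max over symbols u not appearing in X^n of p(u) (with M_max = 0 if all symbols appear). Then for every r ≥ 1 and every α ∈ (0,1), P(M_max(X^n) ≥ ((q*)^{r-1}(1-q*)^n / α)^{1/r}) ≤ α, where q* = (r-1)/(r-1+n). -/

import Mathlib

open MeasureTheory ENNReal

lemma key_opt (a : ℝ) (ha : 0 ≤ a) (n : ℕ) (hn : 1 ≤ n) (s : ℝ) (hs0 : 0 ≤ s) (hs1 : s ≤ 1) :
    s ^ a * (1 - s) ^ n ≤ (a / (a + n)) ^ a * (1 - a / (a + n)) ^ n := by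
  have hn0 : (0:ℝ) < n := by exact_mod_cast hn
  have hden : (0:ℝ) < a + n := by linarith
  set q : ℝ := a / (a + n) with hq
  have hq0 : 0 ≤ q := div_nonneg ha hden.le
  have hq1 : q < 1 := (div_lt_one hden).2 (by linarith)
  rcases eq_or_lt_of_le ha with ha0 | hapos
  · simp only [← ha0, Real.rpow_zero, one_mul]
    have : q = 0 := by simp [hq, ← ha0]
    rw [this]
    simpa using pow_le_one₀ (by linarith) (by linarith)
  · have hqpos : 0 < q := div_pos hapos hden
    have h1qpos : 0 < 1 - q := by linarith
    rcases eq_or_lt_of_le hs0 with hs0' | hspos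
    · rw [← hs0', Real.zero_rpow (ne_of_gt hapos), zero_mul]
      positivity
    · have hamgm := Real.geom_mean_le_arith_mean2_weighted (w₁ := q) (w₂ := 1 - q)
        (p₁ := s / q) (p₂ := (1 - s) / (1 - q)) hq0 h1qpos.le
        (div_nonneg hs0 hq0) (div_nonneg (by linarith) h1qpos.le) (by ring)
      have heq : q * (s / q) + (1 - q) * ((1 - s) / (1 - q)) = 1 := by
        field_simp
        ring
      rw [heq] at hamgm
      have hqa : q * (a + n) = a := by rw [hq]; field_simp
      have h1qn : (1 - q) * (a + n) = (n : ℝ) := by rw [hq]; field_simp; ring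
      have h2 : ((s / q) ^ q * ((1 - s) / (1 - q)) ^ (1 - q)) ^ (a + n) ≤ 1 := by
        calc _ ≤ (1:ℝ) ^ (a+n) := Real.rpow_le_rpow (mul_nonneg (Real.rpow_nonneg (div_nonneg hs0 hq0) _) (Real.rpow_nonneg (div_nonneg (by linarith) h1qpos.le) _)) hamgm hden.le
        _ = 1 := Real.one_rpow _
      have h3 : ((s / q) ^ q * ((1 - s) / (1 - q)) ^ (1 - q)) ^ (a + n)
          = (s / q) ^ a * ((1 - s) / (1 - q)) ^ (n:ℝ) := by
        rw [Real.mul_rpow (Real.rpow_nonneg (div_nonneg hs0 hq0) _) (Real.rpow_nonneg (div_nonneg (by linarith) h1qpos.le) _),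
          ← Real.rpow_mul (div_nonneg hs0 hq0), ← Real.rpow_mul (div_nonneg (by linarith) h1qpos.le), hqa, h1qn]
      rw [h3] at h2
      have hexp : (s / q) ^ a * ((1 - s) / (1 - q)) ^ (n:ℝ)
          = (s ^ a * (1 - s) ^ n) / (q ^ a * (1 - q) ^ n) := by
        rw [Real.div_rpow hs0 hq0, Real.div_rpow (by linarith) h1qpos.le,
          Real.rpow_natCast, Real.rpow_natCast]
        ring
      rw [hexp, div_le_one (by positivity)] at h2
      simpa using h2



/-- Let `p` be a probability distribution over a countable alphabet, `X^n`
an i.i.d. sample of size `n`, and `M_max(X^n) = sup_u p(u)·1{N_u(X^n)=0}` (which is `0`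
if all symbols appear). Then for every `r ≥ 1` and every `α ∈ (0,1)`,
`P(M_max(X^n) ≥ ((q*)^(r-1)(1-q*)^n / α)^(1/r)) ≤ α`, where `q* = (r-1)/(r-1+n)`. -/
theorem Mmax_confidence_interval {X : Type*} [MeasurableSpace X]
    [MeasurableSingletonClass X] [Countable X] [DecidableEq X] [Nonempty X]
    (p : PMF X) (n : ℕ) (hn : 1 ≤ n) (r : ℝ) (hr : 1 ≤ r)
    (α : ℝ) (hα : α ∈ Set.Ioo (0 : ℝ) 1) :
    (Measure.pi fun _ : Fin n => p.toMeasure)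
      {x : Fin n → X |
        (((r - 1) / (r - 1 + n)) ^ (r - 1) * (1 - (r - 1) / (r - 1 + n)) ^ n / α) ^ (1 / r)
          ≤ ⨆ u : X,
              (if (Finset.univ.filter fun i => x i = u).card = 0 then (p u).toReal else 0)}
    ≤ ENNReal.ofReal α := by
  obtain ⟨hα0, hα1⟩ := hα
  have hr0 : (0:ℝ) < r := by linarith
  have ha : (0:ℝ) ≤ r - 1 := by linarith
  have hn0 : (0:ℝ) < n := by exact_mod_cast hn
  set μ := Measure.pi fun _ : Fin n => p.toMeasure with hμ
  set q : ℝ := (r - 1) / (r - 1 + n) with hq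
  set C : ℝ := q ^ (r - 1) * (1 - q) ^ n with hC
  -- positivity of C
  have hq0 : 0 ≤ q := div_nonneg ha (by linarith)
  have hq1 : q < 1 := (div_lt_one (by linarith)).2 (by linarith)
  have hCpos : 0 < C := by
    rcases eq_or_lt_of_le ha with h0 | hpos
    · have hq' : q = 0 := by simp [hq, ← h0]
      rw [hC, hq', ← h0, Real.rpow_zero]
      norm_num
    · have : 0 < q := div_pos hpos (by linarith)
      have h1q : 0 < 1 - q := by linarith
      have := Real.rpow_pos_of_pos this (r - 1)
      positivity
  set t : ℝ := (C / α) ^ (1 / r) with ht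
  have htpos : 0 < t := Real.rpow_pos_of_pos (div_pos hCpos hα0) _
  have htr : t ^ r = C / α := by
    rw [ht, ← Real.rpow_mul (div_pos hCpos hα0).le, one_div_mul_cancel hr0.ne', Real.rpow_one]
  -- the function f
  set f : (Fin n → X) → ℝ≥0∞ := fun x =>
    ∑' u : X, (if (Finset.univ.filter fun i => x i = u).card = 0 then (p u) ^ r else 0) with hf
  -- sets
  have hSeq : ∀ u : X, {x : Fin n → X | (Finset.univ.filter fun i => x i = u).card = 0}
      = Set.univ.pi (fun _ : Fin n => ({u}ᶜ : Set X)) := by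
    intro u
    ext x
    simp [Finset.card_eq_zero, Finset.filter_eq_empty_iff, Set.mem_pi]
  have hSmeas : ∀ u : X, MeasurableSet {x : Fin n → X | (Finset.univ.filter fun i => x i = u).card = 0} := by
    intro u
    rw [hSeq u]
    exact MeasurableSet.univ_pi fun _ => (measurableSet_singleton u).compl
  have hSvol : ∀ u : X, μ {x : Fin n → X | (Finset.univ.filter fun i => x i = u).card = 0}
      = (1 - p u) ^ n := by
    intro u
    rw [hSeq u, hμ, Measure.pi_pi]
    have h1 : p.toMeasure ({u}ᶜ) = 1 - p u := by
      rw [measure_compl (measurableSet_singleton u) (measure_ne_top _ _),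
        PMF.toMeasure_apply_singleton _ _ (measurableSet_singleton u)]
      simp
    simp [h1]
  -- measurability of f
  have hterm : ∀ u : X, Measurable (fun x : Fin n → X =>
      (if (Finset.univ.filter fun i => x i = u).card = 0 then (p u) ^ r else 0)) := by
    intro u
    have : (fun x : Fin n → X => (if (Finset.univ.filter fun i => x i = u).card = 0 then (p u) ^ r else 0))
        = Set.indicator {x : Fin n → X | (Finset.univ.filter fun i => x i = u).card = 0} (fun _ => (p u) ^ r) := by
      ext x
      simp only [Set.indicator_apply, Set.mem_setOf_eq]
    rw [this]
    exact Measurable.indicator measurable_const (hSmeas u)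
  have hfmeas : Measurable f := Measurable.ennreal_tsum hterm
  -- lintegral of f
  have hint : ∫⁻ x, f x ∂μ = ∑' u : X, (p u) ^ r * (1 - p u) ^ n := by
    rw [hf, lintegral_tsum (fun u => ?_)]
    · congr 1
      ext u
      have : (fun x : Fin n → X => (if (Finset.univ.filter fun i => x i = u).card = 0 then (p u) ^ r else 0))
          = Set.indicator {x : Fin n → X | (Finset.univ.filter fun i => x i = u).card = 0} (fun _ => (p u) ^ r) := by
        ext x
        simp only [Set.indicator_apply, Set.mem_setOf_eq]
      rw [this, lintegral_indicator_const (hSmeas u), hSvol u]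
    · exact (hterm u).aemeasurable
  -- bound on the integral
  have hsum_le : ∑' u : X, (p u) ^ r * (1 - p u) ^ n ≤ ENNReal.ofReal C := by
    calc ∑' u : X, (p u) ^ r * (1 - p u) ^ n
        ≤ ∑' u : X, p u * ENNReal.ofReal C := by
          refine ENNReal.tsum_le_tsum fun u => ?_
          rcases eq_or_ne (p u) 0 with h0 | h0
          · simp [h0, ENNReal.zero_rpow_of_pos hr0]
          · have hptop : p u ≠ ⊤ := PMF.apply_ne_top p u
            have hple : p u ≤ 1 := p.coe_le_one u
            have hsplit : (p u) ^ r = p u * (p u) ^ (r - 1) := by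
              nth_rewrite 1 [show r = 1 + (r - 1) by ring]
              rw [ENNReal.rpow_add 1 (r-1) h0 hptop, ENNReal.rpow_one]
            rw [hsplit, mul_assoc]
            refine mul_le_mul_right ?_ (p u)
            set sR : ℝ := (p u).toReal with hsR
            have hs0 : 0 ≤ sR := ENNReal.toReal_nonneg
            have hs1 : sR ≤ 1 := by
              have := ENNReal.toReal_mono (by norm_num) hple
              simpa using this
            have hpu : p u = ENNReal.ofReal sR := (ENNReal.ofReal_toReal hptop).symm
            have hspos : 0 < sR := ENNReal.toReal_pos h0 hptop
            have e1 : (p u) ^ (r - 1) = ENNReal.ofReal (sR ^ (r - 1)) := by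
              rw [hpu, ENNReal.ofReal_rpow_of_pos hspos]
            have e2 : (1 : ℝ≥0∞) - p u = ENNReal.ofReal (1 - sR) := by
              rw [hpu, ENNReal.ofReal_sub _ hs0]
              · simp
            rw [e1, e2, ← ENNReal.ofReal_pow (by linarith), ← ENNReal.ofReal_mul
              (Real.rpow_nonneg hs0 _)]
            exact ENNReal.ofReal_le_ofReal (key_opt (r - 1) ha n hn sR hs0 hs1)
    _ = ENNReal.ofReal C := by rw [ENNReal.tsum_mul_right, p.tsum_coe, one_mul]
  -- event inclusion
  have hincl : {x : Fin n → X | t ≤ ⨆ u : X,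
        (if (Finset.univ.filter fun i => x i = u).card = 0 then (p u).toReal else 0)}
      ⊆ {x : Fin n → X | ENNReal.ofReal (C / α) ≤ f x} := by
    intro x hx
    simp only [Set.mem_setOf_eq] at hx ⊢
    have hfle1 : f x ≤ 1 := by
      calc f x ≤ ∑' u : X, p u := by
            refine ENNReal.tsum_le_tsum fun u => ?_
            by_cases h : (Finset.univ.filter fun i => x i = u).card = 0
            · simp only [h, if_true]
              calc (p u) ^ r ≤ (p u) ^ (1:ℝ) :=
                    ENNReal.rpow_le_rpow_of_exponent_ge (p.coe_le_one u) hr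
              _ = p u := ENNReal.rpow_one _
            · simp [h]
      _ = 1 := p.tsum_coe
    have hfx_top : f x ≠ ⊤ := ne_top_of_le_ne_top ENNReal.one_ne_top hfle1
    set F : ℝ := (f x).toReal with hF
    have hF0 : 0 ≤ F := ENNReal.toReal_nonneg
    have hsup : (⨆ u : X,
        (if (Finset.univ.filter fun i => x i = u).card = 0 then (p u).toReal else 0))
        ≤ F ^ (1 / r) := by
      refine ciSup_le fun u => ?_
      by_cases h : (Finset.univ.filter fun i => x i = u).card = 0
      · simp only [h, if_true]
        have h1 : (p u) ^ r ≤ f x := by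
          have h2 := ENNReal.le_tsum (f := fun u : X =>
            (if (Finset.univ.filter fun i => x i = u).card = 0 then (p u) ^ r else 0)) u
          rw [if_pos h] at h2
          exact h2
        have h2 : (p u).toReal ^ r ≤ F := by
          rw [ENNReal.toReal_rpow]
          exact ENNReal.toReal_mono hfx_top h1
        calc (p u).toReal = ((p u).toReal ^ r) ^ (1 / r) := by
              rw [← Real.rpow_mul ENNReal.toReal_nonneg, mul_one_div, div_self hr0.ne',
                Real.rpow_one]
        _ ≤ F ^ (1 / r) := Real.rpow_le_rpow (Real.rpow_nonneg ENNReal.toReal_nonneg _) h2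
              (by positivity)
      · simp only [h, if_false]
        positivity
    have ht' : t ≤ F ^ (1 / r) := hx.trans hsup
    have htr2 : t ^ r ≤ F := by
      calc t ^ r ≤ (F ^ (1 / r)) ^ r := Real.rpow_le_rpow htpos.le ht' hr0.le
      _ = F := by rw [← Real.rpow_mul hF0, one_div_mul_cancel hr0.ne', Real.rpow_one]
    calc ENNReal.ofReal (C / α) = ENNReal.ofReal (t ^ r) := by rw [htr]
    _ ≤ ENNReal.ofReal F := ENNReal.ofReal_le_ofReal htr2
    _ = f x := ENNReal.ofReal_toReal hfx_top
  -- Markov and conclusion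
  have hε0 : ENNReal.ofReal (C / α) ≠ 0 := (ENNReal.ofReal_pos.2 (div_pos hCpos hα0)).ne'
  calc μ {x : Fin n → X | t ≤ ⨆ u : X,
        (if (Finset.univ.filter fun i => x i = u).card = 0 then (p u).toReal else 0)}
      ≤ μ {x : Fin n → X | ENNReal.ofReal (C / α) ≤ f x} := measure_mono hincl
  _ ≤ (∫⁻ x, f x ∂μ) / ENNReal.ofReal (C / α) :=
      meas_ge_le_lintegral_div hfmeas.aemeasurable hε0 ENNReal.ofReal_ne_top
  _ ≤ ENNReal.ofReal C / ENNReal.ofReal (C / α) := by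
      rw [hint]; exact ENNReal.div_le_div_right hsum_le _
  _ = ENNReal.ofReal α := by
      symm
      rw [ENNReal.eq_div_iff hε0 ENNReal.ofReal_ne_top,
        ← ENNReal.ofReal_mul (div_nonneg hCpos.le hα0.le)]
      congr 1
      field_simp
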